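/- If $\bm\alpha\circ\bm\beta/(\bm\zeta+N\bm\alpha) = m\bm\gamma$ for some $m>0$, then $\mathcal{R}_0 = \rho(\mathrm{diag}(N\bm\alpha\circ\bm\beta/(\bm\zeta+N\bm\alpha))(\mathrm{diag}(\bm\gamma)-d_I\mathcal{L})^{-1}) = mN$ for every $d_I > 0$. -/

import Mathlib

open Matrix

/-- A square matrix is quasipositive if all its off-diagonal entries are nonnegative. -/
def Quasipositive {n : ℕ} (L : Matrix (Fin n) (Fin n) ℝ) : Prop :=
  ∀ i j, i ≠ j → 0 ≤ L i j

/-- Irreducibility in the standard sense of matrix theory. -/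
def MatIrreducible {n : ℕ} (L : Matrix (Fin n) (Fin n) ℝ) : Prop :=
  ∀ S : Set (Fin n), S.Nonempty → S ≠ Set.univ → ∃ i ∉ S, ∃ j ∈ S, L i j ≠ 0

/-- The spectral radius: the maximum modulus of the (complex) eigenvalues. -/
noncomputable def specRad {n : ℕ} (M : Matrix (Fin n) (Fin n) ℝ) : ℝ :=
  sSup ((fun z : ℂ => ‖z‖) '' spectrum ℂ (M.map (algebraMap ℝ ℂ)))

lemma spec_det_aux {k : ℕ} (M : Matrix (Fin k) (Fin k) ℂ) (z : ℂ) :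
    z ∈ spectrum ℂ M ↔ (z • (1 : Matrix (Fin k) (Fin k) ℂ) - M).det = 0 := by
  rw [spectrum.mem_iff, Matrix.isUnit_iff_isUnit_det, isUnit_iff_ne_zero, not_ne_iff,
    Algebra.algebraMap_eq_smul_one]

theorem stmt4 {n : ℕ} (hn : 0 < n) (L : Matrix (Fin n) (Fin n) ℝ)
    (hq : Quasipositive L) (hirr : MatIrreducible L)
    (hcol : ∀ j, ∑ i, L i j = 0)
    (α β γ ζ : Fin n → ℝ) (N m : ℝ) (hN : 0 < N) (hm : 0 < m)
    (hα : ∀ j, 0 < α j) (hαnull : L.mulVec α = 0) (hαsum : ∑ j, α j = 1)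
    (hβ : ∀ j, 0 < β j) (hγ : ∀ j, 0 < γ j) (hζ : ∀ j, 0 < ζ j)
    (hprop : ∀ i, α i * β i / (ζ i + N * α i) = m * γ i) :
    ∀ dI : ℝ, 0 < dI →
      specRad (Matrix.diagonal (fun i => N * α i * β i / (ζ i + N * α i)) *
        (Matrix.diagonal γ - dI • L)⁻¹) = m * N := by
  intro dI hdI
  haveI : NeZero n := ⟨hn.ne'⟩
  have hfun : (fun i => N * α i * β i / (ζ i + N * α i)) = fun i => m * N * γ i := by
    funext i
    rw [mul_assoc, mul_div_assoc, hprop i]; ring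
  rw [hfun]
  set D : Matrix (Fin n) (Fin n) ℝ := Matrix.diagonal (fun i => m * N * γ i) with hD
  set A : Matrix (Fin n) (Fin n) ℝ := Matrix.diagonal γ - dI • L with hA
  have hLe : ∀ k, ∑ i ∈ Finset.univ.erase k, L i k = -L k k := by
    intro k
    have := hcol k
    rw [← Finset.add_sum_erase _ _ (Finset.mem_univ k)] at this
    linarith
  have hLkk : ∀ k, L k k ≤ 0 := by
    intro k
    have h1 : 0 ≤ ∑ i ∈ Finset.univ.erase k, L i k :=
      Finset.sum_nonneg fun i hi => hq i k (Finset.ne_of_mem_erase hi)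
    linarith [hLe k]
  have hAoff : ∀ i k, i ≠ k → A i k = -(dI * L i k) := by
    intro i k hik
    simp [hA, Matrix.diagonal_apply_ne _ hik]
  have hAkk : ∀ k, A k k = γ k - dI * L k k := by
    intro k; simp [hA]
  have hAcol : ∀ k, ∑ i, A i k = γ k := by
    intro k
    simp only [hA, Matrix.sub_apply, Matrix.smul_apply, smul_eq_mul, Finset.sum_sub_distrib,
      ← Finset.mul_sum, hcol k, mul_zero, sub_zero]
    simp [Matrix.diagonal_apply]
  -- A is invertible (column strict diagonal dominance)
  have hdet : A.det ≠ 0 := by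
    apply det_ne_zero_of_sum_col_lt_diag
    intro k
    have h1 : ∀ i ∈ Finset.univ.erase k, ‖A i k‖ = dI * L i k := by
      intro i hi
      have hik : i ≠ k := Finset.ne_of_mem_erase hi
      rw [hAoff i k hik, norm_neg, Real.norm_eq_abs,
        abs_of_nonneg (mul_nonneg hdI.le (hq i k hik))]
    rw [Finset.sum_congr rfl h1, ← Finset.mul_sum, hLe k, hAkk k, Real.norm_eq_abs,
      abs_of_pos (by nlinarith [hγ k, hLkk k])]
    nlinarith [hγ k, hLkk k]
  have hiu : IsUnit A.det := isUnit_iff_ne_zero.mpr hdet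
  have hMA : D * A⁻¹ * A = D := by
    rw [Matrix.mul_assoc, Matrix.nonsing_inv_mul A hiu, Matrix.mul_one]
  set M : Matrix (Fin n) (Fin n) ℝ := D * A⁻¹ with hM
  -- column sums of M are all m*N
  have hvA : (fun _ => (1:ℝ)) ᵥ* A = γ := by
    funext k
    simp only [Matrix.vecMul, dotProduct, one_mul]
    exact hAcol k
  have hvM : (fun _ => (1:ℝ)) ᵥ* M = fun _ => m * N := by
    have h2 : ((fun _ => (1:ℝ)) ᵥ* M) ᵥ* A = ((fun _ => m * N) : Fin n → ℝ) ᵥ* A := by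
      rw [Matrix.vecMul_vecMul, hMA]
      funext k
      rw [hD, Matrix.vecMul_diagonal, one_mul]
      simp only [Matrix.vecMul, dotProduct]
      rw [← Finset.mul_sum, hAcol k]
    have h3 := congrArg (· ᵥ* A⁻¹) h2
    simpa only [Matrix.vecMul_vecMul, Matrix.mul_assoc, Matrix.mul_nonsing_inv A hiu,
      Matrix.mul_one, Matrix.vecMul_one] using h3
  have hMcol : ∀ k, ∑ j, M j k = m * N := by
    intro k
    have := congrFun hvM k
    simpa [Matrix.vecMul, dotProduct] using this
  -- complex versions
  set f := algebraMap ℝ ℂ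
  set Mc : Matrix (Fin n) (Fin n) ℂ := M.map f with hMc
  set Ac : Matrix (Fin n) (Fin n) ℂ := A.map f with hAc
  set Dc : Matrix (Fin n) (Fin n) ℂ := D.map f with hDc
  have hMAc : Mc * Ac = Dc := by
    rw [hMc, hAc, hDc, ← Matrix.map_mul, hMA]
  -- m*N is in the spectrum
  have hmem : ((m * N : ℝ) : ℂ) ∈ spectrum ℂ Mc := by
    rw [spec_det_aux]
    rw [← Matrix.det_transpose]
    rw [← Matrix.exists_mulVec_eq_zero_iff]
    refine ⟨fun _ => 1, ?_, ?_⟩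
    · intro h
      have := congrFun h ⟨0, hn⟩
      simp at this
    · funext i
      simp only [Matrix.mulVec, dotProduct, Matrix.transpose_apply, Matrix.sub_apply,
        Matrix.smul_apply, smul_eq_mul, mul_one, Finset.sum_sub_distrib, Pi.zero_apply]
      have h1 : ∑ j, ((m * N : ℝ) : ℂ) * (1 : Matrix (Fin n) (Fin n) ℂ) j i = ((m * N : ℝ) : ℂ) := by
        rw [Finset.sum_eq_single i (fun b _ hb => by simp [Matrix.one_apply_ne hb]) (by simp)]
        simp
      have h2 : ∑ j, Mc j i = ((m * N : ℝ) : ℂ) := by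
        simp only [hMc, Matrix.map_apply]
        rw [← map_sum]
        rw [hMcol i]
        rfl
      rw [h1, h2, sub_self]
  -- the spectral bound
  have hbound : ∀ z ∈ spectrum ℂ Mc, ‖z‖ ≤ m * N := by
    intro z hz
    rw [spec_det_aux, ← Matrix.det_transpose, ← Matrix.exists_mulVec_eq_zero_iff] at hz
    obtain ⟨w, hw0, hw⟩ := hz
    -- (z•1 - Mc)ᵀ *ᵥ w = 0  →  Mcᵀ *ᵥ w = z • w
    have hMw : Mcᵀ *ᵥ w = z • w := by
      have : (z • (1 : Matrix (Fin n) (Fin n) ℂ))ᵀ *ᵥ w - Mcᵀ *ᵥ w = 0 := by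
        rw [← Matrix.sub_mulVec, ← Matrix.transpose_sub]; exact hw
      have h1 : (z • (1 : Matrix (Fin n) (Fin n) ℂ))ᵀ *ᵥ w = z • w := by
        rw [Matrix.transpose_smul, Matrix.transpose_one, Matrix.smul_mulVec,
          Matrix.one_mulVec]
      rw [h1] at this
      exact (sub_eq_zero.mp this).symm
    -- Dc *ᵥ w = z • (Acᵀ *ᵥ w)
    have hkey : Dc *ᵥ w = z • (Acᵀ *ᵥ w) := by
      have h1 : Acᵀ *ᵥ (Mcᵀ *ᵥ w) = (Mc * Ac)ᵀ *ᵥ w := by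
        rw [Matrix.transpose_mul, Matrix.mulVec_mulVec]
      rw [hMw, hMAc] at h1
      have h2 : Dcᵀ = Dc := by
        rw [hDc, hD]
        rw [Matrix.diagonal_map (by simp), Matrix.diagonal_transpose]
      rw [h2] at h1
      rw [← h1, Matrix.mulVec_smul]
    -- pick the index maximizing |w i|
    obtain ⟨i, hi⟩ := Finite.exists_max (fun i => ‖w i‖)
    have hwi : 0 < ‖w i‖ := by
      by_contra h
      push_neg at h
      apply hw0
      funext j
      have := (hi j).trans h
      have : ‖w j‖ = 0 := le_antisymm this (by positivity)
      simpa using this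
    -- componentwise equation at i
    have heq : ((m * N * γ i : ℝ) : ℂ) * w i = z * ∑ j, ((A j i : ℝ) : ℂ) * w j := by
      have h1 := congrFun hkey i
      have h2 : (Dc *ᵥ w) i = ((m * N * γ i : ℝ) : ℂ) * w i := by
        rw [hDc, hD, Matrix.diagonal_map (by simp), Matrix.mulVec_diagonal]
        rfl
      have h3 : (z • (Acᵀ *ᵥ w)) i = z * ∑ j, ((A j i : ℝ) : ℂ) * w j := by
        simp only [Pi.smul_apply, smul_eq_mul, Matrix.mulVec, dotProduct,
          Matrix.transpose_apply, hAc, Matrix.map_apply]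
        rfl
      rw [← h2, h1, h3]
    -- the estimate
    set c : Fin n → ℝ := fun j => A j i with hc
    have hsplit : ∑ j, ((c j : ℝ) : ℂ) * w j
        = (c i : ℂ) * w i + ∑ j ∈ Finset.univ.erase i, (c j : ℂ) * w j :=
      (Finset.add_sum_erase _ _ (Finset.mem_univ i)).symm
    have hcneg : ∀ j ∈ Finset.univ.erase i, c j ≤ 0 := by
      intro j hj
      show A j i ≤ 0
      rw [hAoff j i (Finset.ne_of_mem_erase hj)]
      simp only [neg_nonpos]
      exact mul_nonneg hdI.le (hq j i (Finset.ne_of_mem_erase hj))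
    have hsum_c : ∑ j ∈ Finset.univ.erase i, (-c j) = c i - γ i := by
      have := hAcol i
      rw [← Finset.add_sum_erase _ _ (Finset.mem_univ i)] at this
      rw [Finset.sum_neg_distrib]
      linarith
    have hcig : γ i ≤ c i := by
      have : 0 ≤ ∑ j ∈ Finset.univ.erase i, (-c j) :=
        Finset.sum_nonneg fun j hj => neg_nonneg.mpr (hcneg j hj)
      linarith [hsum_c]
    set K := ‖w i‖ with hK
    -- |mNγ w i - z c i w i| ≤ |z| (c i - γ i) K
    have h1 : ‖((m * N * γ i : ℝ) : ℂ) * w i - z * (c i : ℂ) * w i‖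
        ≤ ‖z‖ * (c i - γ i) * K := by
      have e1 : ((m * N * γ i : ℝ) : ℂ) * w i - z * (c i : ℂ) * w i
          = z * ∑ j ∈ Finset.univ.erase i, (c j : ℂ) * w j := by
        rw [heq]
        rw [hsplit]
        ring
      rw [e1, norm_mul]
      have e2 : ‖∑ j ∈ Finset.univ.erase i, (c j : ℂ) * w j‖
          ≤ (c i - γ i) * K := by
        calc ‖∑ j ∈ Finset.univ.erase i, (c j : ℂ) * w j‖
            ≤ ∑ j ∈ Finset.univ.erase i, ‖(c j : ℂ) * w j‖ :=
              norm_sum_le _ _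
          _ ≤ ∑ j ∈ Finset.univ.erase i, (-c j) * K := by
              refine Finset.sum_le_sum fun j hj => ?_
              rw [norm_mul, Complex.norm_real, Real.norm_eq_abs, abs_of_nonpos (hcneg j hj)]
              exact mul_le_mul_of_nonneg_left (hi j) (neg_nonneg.mpr (hcneg j hj))
          _ = (c i - γ i) * K := by rw [← Finset.sum_mul, hsum_c]
      calc ‖z‖ * ‖∑ j ∈ Finset.univ.erase i, (c j : ℂ) * w j‖
          ≤ ‖z‖ * ((c i - γ i) * K) :=
            mul_le_mul_of_nonneg_left e2 (by positivity)
        _ = ‖z‖ * (c i - γ i) * K := by ring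
    -- reverse triangle inequality
    have h2 : ‖z‖ * c i * K - m * N * γ i * K
        ≤ ‖((m * N * γ i : ℝ) : ℂ) * w i - z * (c i : ℂ) * w i‖ := by
      have e1 : ‖z * (c i : ℂ) * w i‖ = ‖z‖ * c i * K := by
        rw [norm_mul, norm_mul, Complex.norm_real, Real.norm_eq_abs, abs_of_nonneg (le_trans (hγ i).le hcig)]
      have e2 : ‖((m * N * γ i : ℝ) : ℂ) * w i‖ = m * N * γ i * K := by
        rw [norm_mul, Complex.norm_real, Real.norm_eq_abs, abs_of_pos (mul_pos (mul_pos hm hN) (hγ i))]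
      calc ‖z‖ * c i * K - m * N * γ i * K
          = ‖z * (c i : ℂ) * w i‖ - ‖((m * N * γ i : ℝ) : ℂ) * w i‖ := by
            rw [e1, e2]
        _ ≤ ‖z * (c i : ℂ) * w i - ((m * N * γ i : ℝ) : ℂ) * w i‖ := by
            exact norm_sub_norm_le _ _
        _ = ‖((m * N * γ i : ℝ) : ℂ) * w i - z * (c i : ℂ) * w i‖ := by
            rw [← norm_neg]; ring_nf
    have hfinal : ‖z‖ * γ i * K ≤ m * N * γ i * K := by nlinarith
    have hgk : 0 < γ i * K := mul_pos (hγ i) hwi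
    by_contra hcon
    push_neg at hcon
    nlinarith [hgk, hfinal]
  -- conclude
  have hgreat : IsGreatest ((fun z : ℂ => ‖z‖) '' spectrum ℂ Mc) (m * N) := by
    constructor
    · refine ⟨((m * N : ℝ) : ℂ), hmem, ?_⟩
      show ‖((m * N : ℝ) : ℂ)‖ = m * N
      rw [Complex.norm_real, Real.norm_eq_abs, abs_of_pos (mul_pos hm hN)]
    · rintro x ⟨z, hz, rfl⟩
      exact hbound z hz
  exact hgreat.csSup_eq
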